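/- Let R be a commutative ring, n ≥ 3, and A ⊴ R an ideal. Then [E(n,R), C(n,R,A)] ≤ E(n,R,A), where C(n,R,A) is the full congruence subgroup consisting of matrices congruent to a scalar matrix modulo A, and E(n,R,A) is the relative elementary group of level A. -/

import Mathlib

open Matrix

abbrev Idx (n m : ℕ) := {s : Finset (Fin n) // s.card = m}

def extPow {R : Type*} [CommRing R] (n m : ℕ) (x : Matrix (Fin n) (Fin n) R) :
    Matrix (Idx n m) (Idx n m) R :=
  fun I J => (x.submatrix (⇑(I.1.orderEmbOfFin I.2)) (⇑(J.1.orderEmbOfFin J.2))).det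

/-- The elementary transvection `t_{I,J}(ξ) = e + ξ e_{I,J}` as an element of `GL ι R`. -/
def tGL {R : Type*} [CommRing R] {ι : Type*} [Fintype ι] [DecidableEq ι] {I J : ι}
    (h : I ≠ J) (ξ : R) : GL ι R where
  val := Matrix.transvection I J ξ
  inv := Matrix.transvection I J (-ξ)
  val_inv := by
    rw [Matrix.transvection_mul_transvection_same _ _ h, add_neg_cancel]
    simp [Matrix.transvection]
  inv_val := by
    rw [Matrix.transvection_mul_transvection_same _ _ h, neg_add_cancel]
    simp [Matrix.transvection]

/-- `E(N, A)`: the subgroup generated by all elementary transvections of level `A`. -/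
def elemSub (R : Type*) [CommRing R] (ι : Type*) [Fintype ι] [DecidableEq ι]
    (A : Ideal R) : Subgroup (GL ι R) :=
  Subgroup.closure {g | ∃ (I J : ι) (h : I ≠ J) (ξ : R), ξ ∈ A ∧ g = tGL h ξ}

/-- `E(N, R)`: the (absolute) elementary subgroup. -/
def elemSubFull (R : Type*) [CommRing R] (ι : Type*) [Fintype ι] [DecidableEq ι] :
    Subgroup (GL ι R) :=
  Subgroup.closure {g | ∃ (I J : ι) (h : I ≠ J) (ξ : R), g = tGL h ξ}

/-- The smallest subgroup containing `S` and normalized by `F`: the closure `S^F`. -/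
def closUnder {G : Type*} [Group G] (S F : Subgroup G) : Subgroup G :=
  Subgroup.closure {g | ∃ x ∈ S, ∃ f ∈ F, g = f * x * f⁻¹}

/-- `E(N, R, A)`: the relative elementary subgroup, the normal closure of `E(N,A)`
in `E(N,R)`. -/
def relElemSub (R : Type*) [CommRing R] (ι : Type*) [Fintype ι] [DecidableEq ι]
    (A : Ideal R) : Subgroup (GL ι R) :=
  closUnder (elemSub R ι A) (elemSubFull R ι)

/-- `∧^m E(n,R)`: the image of the elementary group `E(n,R)` under the Cauchy–Binet
homomorphism, as a subgroup of `GL_{binom(n,m)}(R)`. -/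
def wedgeElem (R : Type*) [CommRing R] (n m : ℕ) : Subgroup (GL (Idx n m) R) :=
  Subgroup.closure
    {g | ∃ (i j : Fin n) (_ : i ≠ j) (ξ : R),
      (g : Matrix (Idx n m) (Idx n m) R) = extPow n m (Matrix.transvection i j ξ)}



section Base

variable {R : Type*} [CommRing R] {ι : Type*} [Fintype ι] [DecidableEq ι]

lemma vmv_mul (c m d m' : ι → R) :
    vecMulVec c m * vecMulVec d m' = (m ⬝ᵥ d) • vecMulVec c m' := by
  ext p q
  simp only [Matrix.mul_apply, vecMulVec_apply, Matrix.smul_apply, smul_eq_mul, dotProduct,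
    Finset.sum_mul, Finset.mul_sum]
  apply Finset.sum_congr rfl
  intros
  ring

lemma add_vmv_mul (c m d m' : ι → R) :
    (1 + vecMulVec c m) * (1 + vecMulVec d m') =
      1 + vecMulVec c m + vecMulVec d m' + (m ⬝ᵥ d) • vecMulVec c m' := by
  rw [mul_add, add_mul, add_mul, mul_one, mul_one, one_mul, vmv_mul]
  abel

lemma vmv_add_left (c c' m : ι → R) :
    vecMulVec (c + c') m = vecMulVec c m + vecMulVec c' m := by
  ext p q; simp [vecMulVec_apply, add_mul]

lemma vmv_add_right (c m m' : ι → R) :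
    vecMulVec c (m + m') = vecMulVec c m + vecMulVec c m' := by
  ext p q; simp [vecMulVec_apply, mul_add]

lemma vmv_single_single (i j : ι) (a b : R) :
    vecMulVec (Pi.single i a) (Pi.single j b) = Matrix.single i j (a * b) := by
  ext p q
  simp only [vecMulVec_apply, Pi.single_apply, Matrix.single, Matrix.of_apply]
  by_cases hp : p = i <;> by_cases hq : q = j
  · subst hp; subst hq; simp
  · subst hp; simp [hq, Ne.symm hq]
  · subst hq; simp [hp, Ne.symm hp]
  · simp [hp, hq, Ne.symm hp, Ne.symm hq]

/-- rank one unit `1 + c mᵀ` with `m ⬝ᵥ c = 0`. -/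
def rk1GL (c m : ι → R) (h : m ⬝ᵥ c = 0) : GL ι R where
  val := 1 + vecMulVec c m
  inv := 1 - vecMulVec c m
  val_inv := by
    have hXX : vecMulVec c m * vecMulVec c m = 0 := by rw [vmv_mul, h, zero_smul]
    have : (1 + vecMulVec c m) * (1 - vecMulVec c m)
        = 1 - vecMulVec c m * vecMulVec c m := by noncomm_ring
    rw [this, hXX, sub_zero]
  inv_val := by
    have hXX : vecMulVec c m * vecMulVec c m = 0 := by rw [vmv_mul, h, zero_smul]
    have : (1 - vecMulVec c m) * (1 + vecMulVec c m)
        = 1 - vecMulVec c m * vecMulVec c m := by noncomm_ring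
    rw [this, hXX, sub_zero]

@[simp] lemma rk1GL_val (c m : ι → R) (h : m ⬝ᵥ c = 0) :
    (rk1GL c m h : Matrix ι ι R) = 1 + vecMulVec c m := rfl

@[simp] lemma rk1GL_inv_val (c m : ι → R) (h : m ⬝ᵥ c = 0) :
    (((rk1GL c m h)⁻¹ : GL ι R) : Matrix ι ι R) = 1 - vecMulVec c m := rfl

@[simp] lemma tGL_val {I J : ι} (h : I ≠ J) (ξ : R) :
    (tGL h ξ : Matrix ι ι R) = 1 + Matrix.single I J ξ := rfl

@[simp] lemma tGL_inv_val {I J : ι} (h : I ≠ J) (ξ : R) :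
    (((tGL h ξ)⁻¹ : GL ι R) : Matrix ι ι R) = 1 + Matrix.single I J (-ξ) := rfl

/-- row form: `1 + e_r mᵀ` where `m r = 0`. -/
def rowGL (m : ι → R) (r : ι) (h : m r = 0) : GL ι R :=
  rk1GL (Pi.single r 1) m (by rw [dotProduct_single, h, zero_mul])

/-- column form: `1 + c e_rᵀ` where `c r = 0`. -/
def colGL (c : ι → R) (r : ι) (h : c r = 0) : GL ι R :=
  rk1GL c (Pi.single r 1) (by rw [single_dotProduct, h, mul_zero])

lemma rowGL_val (m : ι → R) (r : ι) (h : m r = 0) :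
    (rowGL m r h : Matrix ι ι R) = 1 + vecMulVec (Pi.single r 1) m := rfl

lemma colGL_val (c : ι → R) (r : ι) (h : c r = 0) :
    (colGL c r h : Matrix ι ι R) = 1 + vecMulVec c (Pi.single r 1) := rfl

/-- The fundamental commutator identity:
`1 + c mᵀ = (1 + c e_rᵀ)(1 + e_r mᵀ)(1 + c e_rᵀ)⁻¹(1 + e_r mᵀ)⁻¹`. -/
lemma rk1_eq_comm (c m : ι → R) (r : ι) (hc : c r = 0) (hm : m r = 0)
    (h : m ⬝ᵥ c = 0) :
    rk1GL c m h = colGL c r hc * rowGL m r hm * (colGL c r hc)⁻¹ * (rowGL m r hm)⁻¹ := by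
  apply Units.ext
  show (1 : Matrix ι ι R) + vecMulVec c m = _
  simp only [colGL, rowGL, Units.val_mul, rk1GL_val, rk1GL_inv_val]
  set X := vecMulVec c (Pi.single r (1 : R)) with hX
  set Y := vecMulVec (Pi.single r (1 : R)) m with hY
  have hXY : X * Y = vecMulVec c m := by
    rw [hX, hY, vmv_mul, single_dotProduct, one_mul, Pi.single_eq_same, one_smul]
  have hYX : Y * X = 0 := by rw [hX, hY, vmv_mul, h, zero_smul]
  have hXX : X * X = 0 := by rw [hX, vmv_mul, single_dotProduct, hc, mul_zero, zero_smul]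
  have hYY : Y * Y = 0 := by rw [hY, vmv_mul, dotProduct_single, hm, zero_mul, zero_smul]
  have e1 : (1 + X) * (1 + Y) = 1 + X + Y + X * Y := by noncomm_ring
  have e2 : (1 + X + Y + X * Y) * (1 - X)
      = 1 + X + Y + X * Y - X - X * X - Y * X - X * Y * X := by noncomm_ring
  have e3 : (1 + Y + X * Y) * (1 - Y) = 1 + Y + X * Y - Y - Y * Y - X * Y * Y := by
    noncomm_ring
  have hXYX : X * Y * X = 0 := by rw [hXY, vmv_mul, h, zero_smul]
  have hXYY : X * Y * Y = 0 := by
    rw [hXY, hY, vmv_mul, dotProduct_single, hm, zero_mul, zero_smul]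
  rw [e1, e2, hXX, hYX, hXYX]
  have : 1 + X + Y + X * Y - X - 0 - 0 - 0 = 1 + Y + X * Y := by abel
  rw [this, e3, hYY, hXYY, hXY]
  abel

end Base

section Base2
variable {R : Type*} [CommRing R] {ι : Type*} [Fintype ι] [DecidableEq ι]

lemma mul_vmv_mul (M N : Matrix ι ι R) (c m : ι → R) :
    M * vecMulVec c m * N = vecMulVec (M *ᵥ c) (m ᵥ* N) := by
  ext p q
  simp only [Matrix.mul_apply, vecMulVec_apply, Matrix.mulVec, Matrix.vecMul, dotProduct]
  rw [Finset.sum_mul_sum]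
  simp only [Finset.sum_mul]
  rw [Finset.sum_comm]
  apply Finset.sum_congr rfl
  intro l _
  apply Finset.sum_congr rfl
  intro k _
  ring

end Base2



section Grp

variable {R : Type*} [CommRing R] {ι : Type*} [Fintype ι] [DecidableEq ι] {A : Ideal R}

lemma tGL_mem_elemSub {I J : ι} (h : I ≠ J) {ξ : R} (hξ : ξ ∈ A) :
    tGL h ξ ∈ elemSub R ι A :=
  Subgroup.subset_closure ⟨I, J, h, ξ, hξ, rfl⟩

lemma tGL_mem_full {I J : ι} (h : I ≠ J) (ξ : R) :
    tGL h ξ ∈ elemSubFull R ι :=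
  Subgroup.subset_closure ⟨I, J, h, ξ, rfl⟩

lemma elemSub_le_full : elemSub R ι A ≤ elemSubFull R ι :=
  Subgroup.closure_mono fun g ⟨I, J, h, ξ, _, e⟩ => ⟨I, J, h, ξ, e⟩

lemma elemSub_le_rel : elemSub R ι A ≤ relElemSub R ι A := fun x hx =>
  Subgroup.subset_closure ⟨x, hx, 1, one_mem _, by simp⟩

lemma rel_conj {f x : GL ι R} (hf : f ∈ elemSubFull R ι) (hx : x ∈ relElemSub R ι A) :
    f * x * f⁻¹ ∈ relElemSub R ι A := by
  induction hx using Subgroup.closure_induction with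
  | mem y hy =>
    obtain ⟨e, he, f', hf', rfl⟩ := hy
    have : f * (f' * e * f'⁻¹) * f⁻¹ = (f * f') * e * (f * f')⁻¹ := by group
    rw [this]
    exact Subgroup.subset_closure ⟨e, he, f * f', mul_mem hf hf', rfl⟩
  | one => simpa using one_mem _
  | mul y z _ _ hy hz =>
    have : f * (y * z) * f⁻¹ = (f * y * f⁻¹) * (f * z * f⁻¹) := by group
    rw [this]; exact mul_mem hy hz
  | inv y _ hy =>
    have : f * y⁻¹ * f⁻¹ = (f * y * f⁻¹)⁻¹ := by group
    rw [this]; exact inv_mem hy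

/-- membership of row-type matrices `1 + e_r mᵀ` in `E(N,A)`. -/
lemma rowGL_mem_aux (A : Ideal R) (r : ι) (s : Finset ι) (hr : r ∉ s) :
    ∀ (m : ι → R), (∀ l, l ∉ s → m l = 0) → (∀ l, m l ∈ A) →
    ∀ x : GL ι R, (x : Matrix ι ι R) = 1 + vecMulVec (Pi.single r 1) m →
      x ∈ elemSub R ι A := by
  induction s using Finset.induction_on with
  | empty =>
    intro m h0 _ x hx
    have hm : m = 0 := funext fun l => h0 l (Finset.notMem_empty l)
    have : x = 1 := by
      apply Units.ext
      rw [hx, hm]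
      have : vecMulVec (Pi.single r (1:R)) (0 : ι → R) = 0 := by
        ext p q; simp [vecMulVec_apply]
      rw [this, add_zero, Units.val_one]
    rw [this]; exact one_mem _
  | @insert a s ha ih =>
    intro m h0 hA x hx
    have hra : r ≠ a := fun h => hr (h ▸ Finset.mem_insert_self a s)
    have hrs : r ∉ s := fun h => hr (Finset.mem_insert_of_mem h)
    have hmr : m r = 0 := h0 r hr
    set m' : ι → R := Function.update m a 0 with hm'
    have hm'r : m' r = 0 := by
      rw [hm', Function.update_apply, if_neg hra]; exact hmr
    have hsum : Pi.single a (m a) + m' = m := by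
      funext l
      by_cases hl : l = a
      · subst hl; simp [hm']
      · simp [hm', Function.update_apply, hl, Pi.single_eq_of_ne hl]
    have hxy : x = tGL hra (m a) * rowGL m' r hm'r := by
      apply Units.ext
      rw [Units.val_mul, hx]
      show _ = (1 + Matrix.single r a (m a)) * ((rowGL m' r hm'r : GL ι R) : Matrix ι ι R)
      rw [rowGL_val]
      have h1 : Matrix.single r a (m a) = vecMulVec (Pi.single r 1) (Pi.single a (m a)) := by
        rw [vmv_single_single, one_mul]
      rw [h1, add_vmv_mul]
      have h2 : Pi.single a (m a) ⬝ᵥ Pi.single r (1:R) = 0 := by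
        rw [single_dotProduct, Pi.single_eq_of_ne hra.symm, mul_zero]
      rw [h2, zero_smul, add_zero, add_assoc, ← vmv_add_right, hsum]
    rw [hxy]
    refine mul_mem (tGL_mem_elemSub hra (hA a)) (ih hrs m' ?_ ?_ _ rfl)
    · intro l hl
      by_cases hla : l = a
      · subst hla; simp [hm']
      · rw [hm', Function.update_apply, if_neg hla]
        exact h0 l (fun hmem => (Finset.mem_insert.mp hmem).elim hla hl)
    · intro l
      rw [hm', Function.update_apply]
      split
      · exact zero_mem A
      · exact hA l

lemma rowGL_mem {m : ι → R} {r : ι} (h : m r = 0) (hA : ∀ l, m l ∈ A) :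
    rowGL m r h ∈ elemSub R ι A := by
  refine rowGL_mem_aux A r (Finset.univ.erase r) (Finset.notMem_erase r _) m ?_ hA _ rfl
  intro l hl
  have : l = r := by
    by_contra hlr
    exact hl (Finset.mem_erase.mpr ⟨hlr, Finset.mem_univ l⟩)
  rw [this]; exact h

/-- membership of column-type matrices `1 + c e_rᵀ` in `E(N,A)`. -/
lemma colGL_mem_aux (A : Ideal R) (r : ι) (s : Finset ι) (hr : r ∉ s) :
    ∀ (c : ι → R), (∀ l, l ∉ s → c l = 0) → (∀ l, c l ∈ A) →
    ∀ x : GL ι R, (x : Matrix ι ι R) = 1 + vecMulVec c (Pi.single r 1) →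
      x ∈ elemSub R ι A := by
  induction s using Finset.induction_on with
  | empty =>
    intro c h0 _ x hx
    have hc : c = 0 := funext fun l => h0 l (Finset.notMem_empty l)
    have : x = 1 := by
      apply Units.ext
      rw [hx, hc]
      have : vecMulVec (0 : ι → R) (Pi.single r (1:R)) = 0 := by
        ext p q; simp [vecMulVec_apply]
      rw [this, add_zero, Units.val_one]
    rw [this]; exact one_mem _
  | @insert a s ha ih =>
    intro c h0 hA x hx
    have hra : a ≠ r := fun h => hr (h ▸ Finset.mem_insert_self a s)
    have hrs : r ∉ s := fun h => hr (Finset.mem_insert_of_mem h)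
    have hcr : c r = 0 := h0 r hr
    set c' : ι → R := Function.update c a 0 with hc'
    have hc'r : c' r = 0 := by
      rw [hc', Function.update_apply, if_neg (Ne.symm hra)]; exact hcr
    have hsum : Pi.single a (c a) + c' = c := by
      funext l
      by_cases hl : l = a
      · subst hl; simp [hc']
      · simp [hc', Function.update_apply, hl, Pi.single_eq_of_ne hl]
    have hxy : x = tGL hra (c a) * colGL c' r hc'r := by
      apply Units.ext
      rw [Units.val_mul, hx]
      show _ = (1 + Matrix.single a r (c a)) * ((colGL c' r hc'r : GL ι R) : Matrix ι ι R)
      rw [colGL_val]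
      have h1 : Matrix.single a r (c a) = vecMulVec (Pi.single a (c a)) (Pi.single r 1) := by
        rw [vmv_single_single, mul_one]
      rw [h1, add_vmv_mul]
      have h2 : Pi.single r (1:R) ⬝ᵥ c' = 0 := by
        rw [single_dotProduct, hc'r, mul_zero]
      rw [h2, zero_smul, add_zero, add_assoc, ← vmv_add_left, hsum]
    rw [hxy]
    refine mul_mem (tGL_mem_elemSub hra (hA a)) (ih hrs c' ?_ ?_ _ rfl)
    · intro l hl
      by_cases hla : l = a
      · subst hla; simp [hc']
      · rw [hc', Function.update_apply, if_neg hla]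
        exact h0 l (fun hmem => (Finset.mem_insert.mp hmem).elim hla hl)
    · intro l
      rw [hc', Function.update_apply]
      split
      · exact zero_mem A
      · exact hA l

lemma colGL_mem {c : ι → R} {r : ι} (h : c r = 0) (hA : ∀ l, c l ∈ A) :
    colGL c r h ∈ elemSub R ι A := by
  refine colGL_mem_aux A r (Finset.univ.erase r) (Finset.notMem_erase r _) c ?_ hA _ rfl
  intro l hl
  have : l = r := by
    by_contra hlr
    exact hl (Finset.mem_erase.mpr ⟨hlr, Finset.mem_univ l⟩)
  rw [this]; exact h

lemma rowGL_mem_full {m : ι → R} {r : ι} (h : m r = 0) :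
    rowGL m r h ∈ elemSubFull R ι :=
  elemSub_le_full (A := ⊤) (rowGL_mem h (fun _ => trivial))

lemma colGL_mem_full {c : ι → R} {r : ι} (h : c r = 0) :
    colGL c r h ∈ elemSubFull R ι :=
  elemSub_le_full (A := ⊤) (colGL_mem h (fun _ => trivial))

end Grp



section Rel

variable {R : Type*} [CommRing R] {ι : Type*} [Fintype ι] [DecidableEq ι] {A : Ideal R}

lemma tGL_mul_same {I J : ι} (h : I ≠ J) (ξ η : R) :
    tGL h ξ * tGL h η = tGL h (ξ + η) :=
  Units.ext (Matrix.transvection_mul_transvection_same _ _ h ξ η)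

lemma colGL_eq_tGL {i r : ι} (hir : i ≠ r) (a : R) (hc : (Pi.single i a : ι → R) r = 0) :
    colGL (Pi.single i a : ι → R) r hc = tGL hir a := by
  apply Units.ext
  rw [colGL_val, tGL_val, vmv_single_single, mul_one]

lemma rowGL_eq_tGL {r j : ι} (hrj : r ≠ j) (b : R) (hm : (Pi.single j b : ι → R) r = 0) :
    rowGL (Pi.single j b : ι → R) r hm = tGL hrj b := by
  apply Units.ext
  rw [rowGL_val, tGL_val, vmv_single_single, one_mul]

lemma rk1GL_eq_tGL {i j : ι} (hij : i ≠ j) (a b : R)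
    (h : Pi.single j b ⬝ᵥ Pi.single i a = 0) :
    rk1GL (Pi.single i a) (Pi.single j b) h = tGL hij (a * b) := by
  apply Units.ext
  rw [rk1GL_val, tGL_val, vmv_single_single]

lemma tGL_comm {i r j : ι} (hir : i ≠ r) (hrj : r ≠ j) (hij : i ≠ j) (a b : R) :
    tGL hir a * tGL hrj b * (tGL hir a)⁻¹ * (tGL hrj b)⁻¹ = tGL hij (a * b) := by
  have hc : (Pi.single i a : ι → R) r = 0 := by apply Pi.single_eq_of_ne (Ne.symm hir)
  have hm : (Pi.single j b : ι → R) r = 0 := by apply Pi.single_eq_of_ne hrj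
  have horth : Pi.single j b ⬝ᵥ Pi.single i a = 0 := by
    rw [single_dotProduct, Pi.single_eq_of_ne (Ne.symm hij), mul_zero]
  rw [← colGL_eq_tGL hir a hc, ← rowGL_eq_tGL hrj b hm,
    ← rk1_eq_comm (Pi.single i a) (Pi.single j b) r hc hm horth,
    rk1GL_eq_tGL hij a b horth]

/-- splitting off the `r`-th coordinate of the column vector. -/
lemma rk1_split_val (u m : ι → R) (r : ι) (hmr : m r = 0)
    (hO2 : m ⬝ᵥ (u - Pi.single r (u r)) = 0) :
    (1 : Matrix ι ι R) + vecMulVec u m =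
      (1 + vecMulVec (Pi.single r 1) (u r • m)) *
        (1 + vecMulVec (u - Pi.single r (u r)) m) := by
  have h1 : vecMulVec (Pi.single r (1:R)) (u r • m) = vecMulVec (Pi.single r (u r)) m := by
    ext p q
    simp only [vecMulVec_apply, Pi.single_apply, Pi.smul_apply, smul_eq_mul]
    split <;> ring
  rw [h1, add_vmv_mul, hO2, zero_smul, add_zero, add_assoc, ← vmv_add_left]
  have : Pi.single r (u r) + (u - Pi.single r (u r)) = u := by abel
  rw [this]

lemma rk1_mem_rel (u m : ι → R) (hO : m ⬝ᵥ u = 0) (hA : ∀ l, m l ∈ A)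
    (r : ι) (hmr : m r = 0) :
    rk1GL u m hO ∈ relElemSub R ι A := by
  set c := u - Pi.single r (u r) with hc
  have hcr : c r = 0 := by simp [hc]
  have hO2 : m ⬝ᵥ c = 0 := by
    rw [hc, dotProduct_sub, hO, dotProduct_single, hmr, zero_mul, sub_zero]
  have hεr : (u r • m) r = 0 := by simp [hmr]
  have key : rk1GL u m hO = rowGL (u r • m) r hεr *
      (colGL c r hcr * rowGL m r hmr * (colGL c r hcr)⁻¹ * (rowGL m r hmr)⁻¹) := by
    rw [← rk1_eq_comm c m r hcr hmr hO2]
    apply Units.ext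
    rw [Units.val_mul, rk1GL_val, rk1GL_val, rowGL_val]
    exact rk1_split_val u m r hmr hO2
  rw [key]
  have hAε : ∀ l, (u r • m) l ∈ A := fun l => by
    rw [Pi.smul_apply, smul_eq_mul]; exact Ideal.mul_mem_left A _ (hA l)
  refine mul_mem (elemSub_le_rel (rowGL_mem hεr hAε)) ?_
  exact mul_mem (rel_conj (colGL_mem_full hcr) (elemSub_le_rel (rowGL_mem hmr hA)))
    (inv_mem (elemSub_le_rel (rowGL_mem hmr hA)))

lemma vmv_zero_right (u : ι → R) : vecMulVec u (0 : ι → R) = 0 := by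
  ext p q; simp [vecMulVec_apply]

lemma rk1_sum_mem {κ : Type*} [DecidableEq κ] (s : Finset κ) (μ : κ → ι → R) (u : ι → R)
    (h1 : ∀ π ∈ s, μ π ⬝ᵥ u = 0) (h2 : ∀ π ∈ s, ∀ l, μ π l ∈ A)
    (h3 : ∀ π ∈ s, ∃ r, μ π r = 0) :
    ∀ x : GL ι R, (x : Matrix ι ι R) = 1 + vecMulVec u (∑ π ∈ s, μ π) →
      x ∈ relElemSub R ι A := by
  induction s using Finset.induction_on with
  | empty =>
    intro x hx
    rw [Finset.sum_empty, vmv_zero_right, add_zero] at hx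
    have : x = 1 := Units.ext (by rw [hx, Units.val_one])
    rw [this]; exact one_mem _
  | @insert a s ha ih =>
    intro x hx
    rw [Finset.sum_insert ha] at hx
    have hOa : μ a ⬝ᵥ u = 0 := h1 a (Finset.mem_insert_self a s)
    set y := rk1GL u (μ a) hOa with hy
    have hyx : ((y⁻¹ : GL ι R) : Matrix ι ι R) * x = 1 + vecMulVec u (∑ π ∈ s, μ π) := by
      rw [hy, rk1GL_inv_val, hx, vmv_add_right]
      have e : (1 - vecMulVec u (μ a)) *
          (1 + (vecMulVec u (μ a) + vecMulVec u (∑ π ∈ s, μ π)))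
          = 1 + vecMulVec u (∑ π ∈ s, μ π)
            - vecMulVec u (μ a) * vecMulVec u (μ a)
            - vecMulVec u (μ a) * vecMulVec u (∑ π ∈ s, μ π) := by noncomm_ring
      rw [e, vmv_mul, vmv_mul, hOa, zero_smul, zero_smul, sub_zero, sub_zero]
    have hx2 : x = y * (y⁻¹ * x) := by group
    rw [hx2]
    obtain ⟨r, hr⟩ := h3 a (Finset.mem_insert_self a s)
    refine mul_mem (rk1_mem_rel u (μ a) hOa (h2 a (Finset.mem_insert_self a s)) r hr) ?_
    refine ih (fun π hπ => h1 π (Finset.mem_insert_of_mem hπ))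
      (fun π hπ => h2 π (Finset.mem_insert_of_mem hπ))
      (fun π hπ => h3 π (Finset.mem_insert_of_mem hπ)) (y⁻¹ * x) ?_
    rw [Units.val_mul]; exact hyx

/-- The key absorption lemma: the exceptional rank-one piece, multiplied by the
transvection, lands in the relative elementary subgroup. -/
lemma lemmaF {i j r : ι} (hij : i ≠ j) (hri : r ≠ i) (hrj : r ≠ j)
    (u m : ι → R) (lam ξ : R) (hO : m ⬝ᵥ u = 0)
    (hsupp : ∀ l, l ≠ i → l ≠ j → m l = 0)
    (hmi : m i ∈ A)
    (hu : ∀ l, l ≠ i → u l ∈ A)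
    (hui : u i - lam ∈ A)
    (hfin : ξ + lam * m j ∈ A) :
    tGL hij ξ * rk1GL u m hO ∈ relElemSub R ι A := by
  have hmr : m r = 0 := hsupp r hri hrj
  set c := u - Pi.single r (u r) with hc
  have hcr : c r = 0 := by simp [hc]
  have hO2 : m ⬝ᵥ c = 0 := by
    rw [hc, dotProduct_sub, hO, dotProduct_single, hmr, zero_mul, sub_zero]
  have hεr : (u r • m) r = 0 := by simp [hmr]
  -- epsilon 1
  set ε₁ := rowGL (u r • m) r hεr with hε₁
  have hε₁mem : ε₁ ∈ elemSub R ι A := by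
    refine rowGL_mem hεr fun l => ?_
    rw [Pi.smul_apply, smul_eq_mul]
    by_cases hli : l = i
    · subst hli; exact Ideal.mul_mem_left A _ hmi
    · exact Ideal.mul_mem_right _ A (hu r hri)
  -- epsilon 2 and a₀
  have hc2 : (c - (Pi.single i lam : ι → R)) r = 0 := by
    rw [Pi.sub_apply, hcr, Pi.single_eq_of_ne hri, sub_zero]
  set ε₂ := colGL (c - (Pi.single i lam : ι → R)) r hc2 with hε₂
  have hε₂mem : ε₂ ∈ elemSub R ι A := by
    refine colGL_mem hc2 fun l => ?_
    rw [Pi.sub_apply]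
    by_cases hli : l = i
    · subst hli
      rw [Pi.single_eq_same, hc, Pi.sub_apply, Pi.single_eq_of_ne (Ne.symm hri), sub_zero]
      exact hui
    · rw [Pi.single_eq_of_ne hli, sub_zero, hc, Pi.sub_apply]
      by_cases hlr : l = r
      · subst hlr; rw [Pi.single_eq_same, sub_self]; exact zero_mem A
      · rw [Pi.single_eq_of_ne hlr, sub_zero]; exact hu l hli
  set a₀ := tGL (Ne.symm hri) lam with ha₀
  have ha' : colGL c r hcr = ε₂ * a₀ := by
    apply Units.ext
    rw [Units.val_mul, hε₂, ha₀, colGL_val, colGL_val, tGL_val]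
    have h1 : Matrix.single i r lam = vecMulVec (Pi.single i lam : ι → R) (Pi.single r 1) := by
      rw [vmv_single_single, mul_one]
    rw [h1, add_vmv_mul]
    have h2 : Pi.single r (1:R) ⬝ᵥ (Pi.single i lam : ι → R) = 0 := by
      rw [single_dotProduct, Pi.single_eq_of_ne hri, mul_zero]
    rw [h2, zero_smul, add_zero, add_assoc, ← vmv_add_left]
    have : c - (Pi.single i lam : ι → R) + (Pi.single i lam : ι → R) = c := by abel
    rw [this]
  -- epsilon 3 and b₀
  set ε₃ := tGL hri (m i) with hε₃
  have hε₃mem : ε₃ ∈ elemSub R ι A := tGL_mem_elemSub hri hmi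
  set b₀ := tGL hrj (m j) with hb₀
  have hb' : rowGL m r hmr = ε₃ * b₀ := by
    apply Units.ext
    rw [Units.val_mul, hε₃, hb₀, rowGL_val, tGL_val, tGL_val]
    have h3 : (1 + Matrix.single r i (m i)) * (1 + Matrix.single r j (m j))
        = 1 + Matrix.single r i (m i) + Matrix.single r j (m j)
          + Matrix.single r i (m i) * Matrix.single r j (m j) := by noncomm_ring
    rw [h3, Matrix.single_mul_single_of_ne (m i) r i r (Ne.symm hri) (m j), add_zero]
    have h4 : Matrix.single r i (m i) + Matrix.single r j (m j)
        = vecMulVec (Pi.single r 1) m := by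
      ext p q
      rcases eq_or_ne p r with rfl | hp
      · rcases eq_or_ne q i with rfl | hq
        · simp [Matrix.single, vecMulVec_apply, Ne.symm hij]
        · rcases eq_or_ne q j with rfl | hq2
          · simp [Matrix.single, vecMulVec_apply, hij, Ne.symm hq]
          · simp [Matrix.single, vecMulVec_apply, Ne.symm hq, Ne.symm hq2,
              hsupp q hq hq2]
      · simp [Matrix.single, vecMulVec_apply, Ne.symm hp, Pi.single_eq_of_ne hp]
    rw [add_assoc, h4]
  -- assemble
  have split : rk1GL u m hO = ε₁ * rk1GL c m hO2 := by
    apply Units.ext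
    rw [Units.val_mul, hε₁, rk1GL_val, rk1GL_val, rowGL_val]
    exact rk1_split_val u m r hmr hO2
  have comm : rk1GL c m hO2 = colGL c r hcr * rowGL m r hmr
      * (colGL c r hcr)⁻¹ * (rowGL m r hmr)⁻¹ := rk1_eq_comm c m r hcr hmr hO2
  set t := tGL hij ξ with ht
  have goalEq : t * rk1GL u m hO
      = (t * ε₁ * t⁻¹) * ((t * ε₂ * t⁻¹) * ((t * a₀ * ε₃ * (t * a₀)⁻¹)
        * (((t * a₀ * b₀ * a₀⁻¹) * ε₂⁻¹ * (t * a₀ * b₀ * a₀⁻¹)⁻¹)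
          * (((t * a₀ * b₀ * a₀⁻¹ * b₀⁻¹) * ε₃⁻¹ * (t * a₀ * b₀ * a₀⁻¹ * b₀⁻¹)⁻¹)
            * (t * a₀ * b₀ * a₀⁻¹ * b₀⁻¹))))) := by
    rw [split, comm, ha', hb']
    group
  rw [goalEq]
  have htf : t ∈ elemSubFull R ι := tGL_mem_full hij ξ
  have ha₀f : a₀ ∈ elemSubFull R ι := tGL_mem_full _ lam
  have hb₀f : b₀ ∈ elemSubFull R ι := tGL_mem_full _ (m j)
  have hK : t * a₀ * b₀ * a₀⁻¹ * b₀⁻¹ ∈ relElemSub R ι A := by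
    have : t * a₀ * b₀ * a₀⁻¹ * b₀⁻¹ = t * (a₀ * b₀ * a₀⁻¹ * b₀⁻¹) := by group
    rw [this, ha₀, hb₀, tGL_comm (Ne.symm hri) hrj hij lam (m j), ht, tGL_mul_same]
    exact elemSub_le_rel (tGL_mem_elemSub hij hfin)
  refine mul_mem (rel_conj htf (elemSub_le_rel hε₁mem)) ?_
  refine mul_mem (rel_conj htf (elemSub_le_rel hε₂mem)) ?_
  refine mul_mem (rel_conj (mul_mem htf ha₀f) (elemSub_le_rel hε₃mem)) ?_
  refine mul_mem (rel_conj (mul_mem (mul_mem (mul_mem htf ha₀f) hb₀f) (inv_mem ha₀f))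
    (inv_mem (elemSub_le_rel hε₂mem))) ?_
  refine mul_mem (rel_conj (mul_mem (mul_mem (mul_mem (mul_mem htf ha₀f) hb₀f) (inv_mem ha₀f))
    (inv_mem hb₀f)) (inv_mem (elemSub_le_rel hε₃mem))) hK

end Rel



section Center

variable {S : Type*} [CommRing S] {ι : Type*} [Fintype ι] [DecidableEq ι]

lemma center_commute_std {x : GL ι S} (hx : x ∈ Subgroup.center (GL ι S))
    {a b : ι} (hab : a ≠ b) :
    (x : Matrix ι ι S) * Matrix.single a b 1 = Matrix.single a b 1 * (x : Matrix ι ι S) := by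
  have h := (Subgroup.mem_center_iff.mp hx) (tGL hab (1 : S))
  have hval : (tGL hab (1:S) : Matrix ι ι S) * (x : Matrix ι ι S)
      = (x : Matrix ι ι S) * (tGL hab (1:S) : Matrix ι ι S) := by
    rw [← Units.val_mul, ← Units.val_mul, h]
  rw [tGL_val] at hval
  rw [add_mul, one_mul, mul_add, mul_one] at hval
  have := add_left_cancel hval
  exact this.symm

lemma center_offdiag {x : GL ι S} (hx : x ∈ Subgroup.center (GL ι S))
    {p q : ι} (hpq : p ≠ q) : (x : Matrix ι ι S) p q = 0 := by
  have h := center_commute_std hx (Ne.symm hpq)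
  have h2 : ((x : Matrix ι ι S) * Matrix.single q p 1 : Matrix ι ι S) p p
      = (Matrix.single q p 1 * (x : Matrix ι ι S) : Matrix ι ι S) p p := by rw [h]
  rw [Matrix.mul_single_apply_same, Matrix.single_mul_apply_of_ne (h := hpq)] at h2
  rw [← mul_one ((x : Matrix ι ι S) p q)]
  exact h2

lemma center_diag {x : GL ι S} (hx : x ∈ Subgroup.center (GL ι S))
    {p q : ι} (hpq : p ≠ q) : (x : Matrix ι ι S) p p = (x : Matrix ι ι S) q q := by
  have h := center_commute_std hx hpq
  have h2 : ((x : Matrix ι ι S) * Matrix.single p q 1 : Matrix ι ι S) p q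
      = (Matrix.single p q 1 * (x : Matrix ι ι S) : Matrix ι ι S) p q := by rw [h]
  rw [Matrix.mul_single_apply_same, Matrix.single_mul_apply_same,
    mul_one, one_mul] at h2
  exact h2

lemma exists_third {n : ℕ} (hn : 3 ≤ n) (p q : Fin n) : ∃ r : Fin n, r ≠ p ∧ r ≠ q := by
  by_contra h
  push_neg at h
  have hsub : (Finset.univ : Finset (Fin n)) ⊆ {p, q} := by
    intro r _
    rcases eq_or_ne r p with rfl | hrp
    · exact Finset.mem_insert_self _ _
    · rw [h r hrp]; exact Finset.mem_insert_of_mem (Finset.mem_singleton_self q)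
  have h1 := Finset.card_le_card hsub
  rw [Finset.card_univ, Fintype.card_fin] at h1
  have h2 : ({p, q} : Finset (Fin n)).card ≤ 2 := by
    apply le_trans (Finset.card_insert_le _ _)
    simp
  omega

end Center

open scoped commutatorElement

/-- Standard commutator formula (Vaserstein, Borevich–Vavilov): for `n ≥ 3`,
`[E(n,R), C(n,R,A)] ≤ E(n,R,A)`, where `C(n,R,A)` is the full congruence subgroup — the
preimage of the center of `GL_n(R/A)` under the reduction homomorphism — and `E(n,R,A)`
is the relative elementary group of level `A`. -/
theorem standard_commutator_formula {R : Type*} [CommRing R] {n : ℕ} (hn : 3 ≤ n)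
    (A : Ideal R) :
    ⁅elemSubFull R (Fin n),
        Subgroup.comap (Matrix.GeneralLinearGroup.map (Ideal.Quotient.mk A))
          (Subgroup.center (GL (Fin n) (R ⧸ A)))⁆ ≤
      relElemSub R (Fin n) A := by
  rw [Subgroup.commutator_le]
  intro f hf g hg
  rw [Subgroup.mem_comap] at hg
  have hf' : f ∈ Subgroup.closure
      {x : GL (Fin n) R | ∃ (I J : Fin n) (h : I ≠ J) (ξ : R), x = tGL h ξ} := hf
  clear hf
  induction hf' using Subgroup.closure_induction with
  | one =>
    have h1 : ⁅(1 : GL (Fin n) R), g⁆ = 1 := by rw [commutatorElement_def]; group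
    rw [h1]; exact one_mem _
  | mul x y hx hy px py =>
    have hxy : ⁅x * y, g⁆ = (x * ⁅y, g⁆ * x⁻¹) * ⁅x, g⁆ := by
      simp only [commutatorElement_def]; group
    rw [hxy]
    exact mul_mem (rel_conj hx py) px
  | inv x hx px =>
    have hxy : ⁅x⁻¹, g⁆ = x⁻¹ * ⁅x, g⁆⁻¹ * (x⁻¹)⁻¹ := by
      simp only [commutatorElement_def]; group
    rw [hxy]
    exact rel_conj (inv_mem hx) (inv_mem px)
  | mem x hx =>
    obtain ⟨i, j, hij, ξ, rfl⟩ := hx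
    have memA : ∀ y : R, Ideal.Quotient.mk A y = 0 → y ∈ A := fun y h =>
      Ideal.Quotient.eq_zero_iff_mem.mp h
    -- quotient entry structure
    have hmapinv : Matrix.GeneralLinearGroup.map (Ideal.Quotient.mk A) g⁻¹
        = (Matrix.GeneralLinearGroup.map (Ideal.Quotient.mk A) g)⁻¹ :=
      map_inv (Matrix.GeneralLinearGroup.map (Ideal.Quotient.mk A)) g
    have hgci : (Matrix.GeneralLinearGroup.map (Ideal.Quotient.mk A) g)⁻¹
        ∈ Subgroup.center (GL (Fin n) (R ⧸ A)) := inv_mem hg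
    have hYe : ∀ p q, ((Matrix.GeneralLinearGroup.map (Ideal.Quotient.mk A) g :
        GL (Fin n) (R ⧸ A)) : Matrix (Fin n) (Fin n) (R ⧸ A)) p q
        = Ideal.Quotient.mk A ((g : Matrix (Fin n) (Fin n) R) p q) := fun p q => rfl
    have hZe : ∀ p q, (((Matrix.GeneralLinearGroup.map (Ideal.Quotient.mk A) g)⁻¹ :
        GL (Fin n) (R ⧸ A)) : Matrix (Fin n) (Fin n) (R ⧸ A)) p q
        = Ideal.Quotient.mk A (((g⁻¹ : GL (Fin n) R) : Matrix (Fin n) (Fin n) R) p q) := by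
      intro p q
      rw [← hmapinv]
      rfl
    have hYoff : ∀ p q : Fin n, p ≠ q →
        Ideal.Quotient.mk A ((g : Matrix (Fin n) (Fin n) R) p q) = 0 := fun p q hpq => by
      rw [← hYe]; exact center_offdiag hg hpq
    have hZoff : ∀ p q : Fin n, p ≠ q →
        Ideal.Quotient.mk A (((g⁻¹ : GL (Fin n) R) : Matrix (Fin n) (Fin n) R) p q) = 0 :=
      fun p q hpq => by
        rw [← hZe]; exact center_offdiag hgci hpq
    have hYdiag : ∀ p : Fin n, Ideal.Quotient.mk A ((g : Matrix (Fin n) (Fin n) R) p p)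
        = Ideal.Quotient.mk A ((g : Matrix (Fin n) (Fin n) R) i i) := fun p => by
      rcases eq_or_ne p i with rfl | hpi
      · rfl
      · rw [← hYe, ← hYe]; exact center_diag hg hpi
    have hZdiag : ∀ p : Fin n,
        Ideal.Quotient.mk A (((g⁻¹ : GL (Fin n) R) : Matrix (Fin n) (Fin n) R) p p)
        = Ideal.Quotient.mk A (((g⁻¹ : GL (Fin n) R) : Matrix (Fin n) (Fin n) R) i i) :=
      fun p => by
        rcases eq_or_ne p i with rfl | hpi
        · rfl
        · rw [← hZe, ← hZe]; exact center_diag hgci hpi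
    -- matrix inverses
    have hGGi : (g : Matrix (Fin n) (Fin n) R) * ((g⁻¹ : GL (Fin n) R) : Matrix (Fin n) (Fin n) R)
        = 1 := by rw [← Units.val_mul, mul_inv_cancel, Units.val_one]
    have hGiG : ((g⁻¹ : GL (Fin n) R) : Matrix (Fin n) (Fin n) R) * (g : Matrix (Fin n) (Fin n) R)
        = 1 := by rw [← Units.val_mul, inv_mul_cancel, Units.val_one]
    -- lamQ * lamQ' = 1
    have hQ : Ideal.Quotient.mk A ((g : Matrix (Fin n) (Fin n) R) i i)
        * Ideal.Quotient.mk A (((g⁻¹ : GL (Fin n) R) : Matrix (Fin n) (Fin n) R) i i) = 1 := by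
      have h1 : Ideal.Quotient.mk A
          (((g : Matrix (Fin n) (Fin n) R) *
            ((g⁻¹ : GL (Fin n) R) : Matrix (Fin n) (Fin n) R)) i i) = 1 := by
        rw [hGGi]; simp [Matrix.one_apply]
      rw [Matrix.mul_apply, _root_.map_sum] at h1
      rw [Finset.sum_eq_single i (fun k _ hk => by
        rw [_root_.map_mul, hYoff i k (Ne.symm hk), zero_mul]) (by simp)] at h1
      rw [_root_.map_mul] at h1
      exact h1
    obtain ⟨lam, hlam⟩ := Ideal.Quotient.mk_surjective
      (Ideal.Quotient.mk A ((g : Matrix (Fin n) (Fin n) R) i i))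
    -- vectors
    set u : Fin n → R := fun l => (g : Matrix (Fin n) (Fin n) R) l i with hu
    set w : Fin n → R := fun l => ((g⁻¹ : GL (Fin n) R) : Matrix (Fin n) (Fin n) R) j l with hw
    set z : Fin n → R := fun l => ((g⁻¹ : GL (Fin n) R) : Matrix (Fin n) (Fin n) R) i l with hz
    set v : Fin n → R := fun l => -ξ * w l with hv
    have hwu : w ⬝ᵥ u = 0 := by
      have h1 : w ⬝ᵥ u = (((g⁻¹ : GL (Fin n) R) : Matrix (Fin n) (Fin n) R)
          * (g : Matrix (Fin n) (Fin n) R)) j i := by rw [Matrix.mul_apply]; rfl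
      rw [h1, hGiG]
      exact Matrix.one_apply_ne (Ne.symm hij)
    have hvu : v ⬝ᵥ u = 0 := by
      have h1 : v ⬝ᵥ u = -ξ * (w ⬝ᵥ u) := by
        simp [hv, dotProduct, Finset.mul_sum, mul_assoc]
      rw [h1, hwu, mul_zero]
    have hzu : z ⬝ᵥ u = 1 := by
      have h1 : z ⬝ᵥ u = (((g⁻¹ : GL (Fin n) R) : Matrix (Fin n) (Fin n) R)
          * (g : Matrix (Fin n) (Fin n) R)) i i := by rw [Matrix.mul_apply]; rfl
      rw [h1, hGiG]
      exact Matrix.one_apply_eq i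
    -- commutator value
    have hmid : (g : Matrix (Fin n) (Fin n) R) * ((tGL hij ξ)⁻¹ : GL (Fin n) R).val
        * ((g⁻¹ : GL (Fin n) R) : Matrix (Fin n) (Fin n) R) = 1 + vecMulVec u v := by
      rw [tGL_inv_val]
      have e1 : (g : Matrix (Fin n) (Fin n) R) * (1 + Matrix.single i j (-ξ))
          * ((g⁻¹ : GL (Fin n) R) : Matrix (Fin n) (Fin n) R)
          = (g : Matrix (Fin n) (Fin n) R) * ((g⁻¹ : GL (Fin n) R) : Matrix (Fin n) (Fin n) R)
            + (g : Matrix (Fin n) (Fin n) R) * Matrix.single i j (-ξ)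
              * ((g⁻¹ : GL (Fin n) R) : Matrix (Fin n) (Fin n) R) := by noncomm_ring
      rw [e1, hGGi]
      congr 1
      have e2 : Matrix.single i j (-ξ)
          = vecMulVec (Pi.single i 1 : Fin n → R) (Pi.single j (-ξ) : Fin n → R) := by
        rw [vmv_single_single, one_mul]
      rw [e2, mul_vmv_mul, Matrix.mulVec_single, Matrix.single_vecMul]
      have e3 : (fun l => (g : Matrix (Fin n) (Fin n) R) l i * 1) = u := by
        funext l; rw [mul_one]
      congr 1 <;> funext l <;> simp [u, v, w]
    have hcommval : ((⁅tGL hij ξ, g⁆ : GL (Fin n) R) : Matrix (Fin n) (Fin n) R)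
        = (tGL hij ξ : Matrix (Fin n) (Fin n) R) * (1 + vecMulVec u v) := by
      rw [commutatorElement_def, Units.val_mul, Units.val_mul, Units.val_mul]
      rw [mul_assoc, mul_assoc]
      congr 1
      rw [← mul_assoc]
      exact hmid
    -- the rank-one pieces
    set μ : Fin n × Fin n → Fin n → R := fun π =>
      (z π.1 * v π.2) • (u π.1 • (Pi.single π.2 1 : Fin n → R)
        - u π.2 • (Pi.single π.1 1 : Fin n → R)) with hμ
    have hOall : ∀ π : Fin n × Fin n, μ π ⬝ᵥ u = 0 := by
      intro π
      simp only [hμ, smul_dotProduct, sub_dotProduct, single_dotProduct, smul_eq_mul]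
      ring
    have hsum : ∑ π : Fin n × Fin n, μ π = v := by
      funext l
      rw [Finset.sum_apply]
      have hterm : ∀ π : Fin n × Fin n, μ π l
          = (z π.1 * u π.1) * (v π.2 * (Pi.single π.2 1 : Fin n → R) l)
            - (z π.1 * (Pi.single π.1 1 : Fin n → R) l) * (v π.2 * u π.2) := by
        intro π
        simp only [hμ, Pi.smul_apply, Pi.sub_apply, smul_eq_mul]
        ring
      rw [Finset.sum_congr rfl fun π _ => hterm π, Finset.sum_sub_distrib,
        Fintype.sum_prod_type, Fintype.sum_prod_type]
      rw [← Finset.sum_mul_sum Finset.univ Finset.univ (fun p => z p * u p)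
        (fun q => v q * (Pi.single q 1 : Fin n → R) l)]
      rw [← Finset.sum_mul_sum Finset.univ Finset.univ
        (fun p => z p * (Pi.single p 1 : Fin n → R) l) (fun q => v q * u q)]
      have e1 : (∑ p, z p * u p) = 1 := hzu
      have e2 : (∑ q, v q * u q) = 0 := hvu
      have e3 : (∑ q, v q * (Pi.single q 1 : Fin n → R) l) = v l := by
        rw [Finset.sum_eq_single l (fun q _ hq => by
          rw [Pi.single_eq_of_ne (Ne.symm hq), mul_zero]) (by simp), Pi.single_eq_same, mul_one]
      rw [e1, e2, e3, one_mul, mul_zero, sub_zero]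
    -- membership data for the generic pieces
    have hApieces : ∀ π ∈ Finset.univ.erase ((i, j) : Fin n × Fin n), ∀ l, μ π l ∈ A := by
      intro π hπ l
      have hπne : π ≠ (i, j) := (Finset.mem_erase.mp hπ).1
      have hs : z π.1 * v π.2 ∈ A := by
        apply memA
        rw [_root_.map_mul]
        rcases eq_or_ne π.1 i with h1 | h1
        · have h2 : π.2 ≠ j := fun h2 => hπne (Prod.ext h1 h2)
          have hv0 : Ideal.Quotient.mk A (v π.2) = 0 := by
            show Ideal.Quotient.mk A (-ξ * w π.2) = 0
            rw [_root_.map_mul]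
            show _ * Ideal.Quotient.mk A
              (((g⁻¹ : GL (Fin n) R) : Matrix (Fin n) (Fin n) R) j π.2) = 0
            rw [hZoff j π.2 (Ne.symm h2), mul_zero]
          rw [hv0, mul_zero]
        · have hz0 : Ideal.Quotient.mk A (z π.1) = 0 := hZoff i π.1 (Ne.symm h1)
          rw [hz0, zero_mul]
      have hform : μ π l = (z π.1 * v π.2) * ((u π.1 • (Pi.single π.2 1 : Fin n → R)
          - u π.2 • (Pi.single π.1 1 : Fin n → R)) l) := rfl
      rw [hform]
      exact Ideal.mul_mem_right _ A hs
    have hzeros : ∀ π : Fin n × Fin n, ∃ r, μ π r = 0 := by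
      intro π
      obtain ⟨r, hr1, hr2⟩ := exists_third hn π.1 π.2
      refine ⟨r, ?_⟩
      simp only [hμ, Pi.smul_apply, Pi.sub_apply, smul_eq_mul,
        Pi.single_eq_of_ne hr2, Pi.single_eq_of_ne hr1]
      ring
    -- data for the exceptional piece
    obtain ⟨r, hri, hrj⟩ := exists_third hn i j
    have hOij := hOall (i, j)
    have hsupp : ∀ l, l ≠ i → l ≠ j → μ (i, j) l = 0 := by
      intro l hli hlj
      simp only [hμ, Pi.smul_apply, Pi.sub_apply, smul_eq_mul,
        Pi.single_eq_of_ne hlj, Pi.single_eq_of_ne hli]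
      ring
    have huA : ∀ l, l ≠ i → u l ∈ A := fun l hl => by
      apply memA
      show Ideal.Quotient.mk A ((g : Matrix (Fin n) (Fin n) R) l i) = 0
      exact hYoff l i hl
    have huj : u j ∈ A := huA j (Ne.symm hij)
    have hmiA : μ (i, j) i ∈ A := by
      have hform : μ (i, j) i = (z i * v j) * (u i * (Pi.single j 1 : Fin n → R) i
          - u j * (Pi.single i 1 : Fin n → R) i) := by
        simp only [hμ, Pi.smul_apply, Pi.sub_apply, smul_eq_mul]
      rw [hform, Pi.single_eq_of_ne hij, Pi.single_eq_same, mul_zero, mul_one, zero_sub]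
      exact Ideal.mul_mem_left A _ (neg_mem huj)
    have huiA : u i - lam ∈ A := by
      apply memA
      rw [_root_.map_sub]
      show Ideal.Quotient.mk A ((g : Matrix (Fin n) (Fin n) R) i i) - _ = 0
      rw [hlam, sub_self]
    have hμj : μ (i, j) j = z i * v j * u i := by
      have hform : μ (i, j) j = (z i * v j) * (u i * (Pi.single j 1 : Fin n → R) j
          - u j * (Pi.single i 1 : Fin n → R) j) := by
        simp only [hμ, Pi.smul_apply, Pi.sub_apply, smul_eq_mul]
      rw [hform, Pi.single_eq_same, Pi.single_eq_of_ne (Ne.symm hij), mul_one, mul_zero,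
        sub_zero]
    have hfinA : ξ + lam * μ (i, j) j ∈ A := by
      apply memA
      rw [_root_.map_add, _root_.map_mul, hlam, hμj, _root_.map_mul, _root_.map_mul]
      have hρz : Ideal.Quotient.mk A (z i) = Ideal.Quotient.mk A
          (((g⁻¹ : GL (Fin n) R) : Matrix (Fin n) (Fin n) R) i i) := rfl
      have hρu : Ideal.Quotient.mk A (u i) = Ideal.Quotient.mk A
          ((g : Matrix (Fin n) (Fin n) R) i i) := rfl
      have hρv : Ideal.Quotient.mk A (v j) = -(Ideal.Quotient.mk A ξ * Ideal.Quotient.mk A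
          (((g⁻¹ : GL (Fin n) R) : Matrix (Fin n) (Fin n) R) i i)) := by
        show Ideal.Quotient.mk A (-ξ * w j) = _
        rw [_root_.map_mul, _root_.map_neg]
        show -Ideal.Quotient.mk A ξ * Ideal.Quotient.mk A
          (((g⁻¹ : GL (Fin n) R) : Matrix (Fin n) (Fin n) R) j j) = _
        rw [hZdiag j]
        ring
      rw [hρz, hρu, hρv]
      linear_combination (-(Ideal.Quotient.mk A ξ) * (Ideal.Quotient.mk A
        ((g : Matrix (Fin n) (Fin n) R) i i) * Ideal.Quotient.mk A
        (((g⁻¹ : GL (Fin n) R) : Matrix (Fin n) (Fin n) R) i i) + 1)) * hQ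
    -- orthogonality of the rest
    have hsplit : μ (i, j) + (∑ π ∈ Finset.univ.erase ((i, j) : Fin n × Fin n), μ π) = v := by
      rw [Finset.add_sum_erase _ μ (Finset.mem_univ (i, j))]
      exact hsum
    have hOrest : (∑ π ∈ Finset.univ.erase ((i, j) : Fin n × Fin n), μ π) ⬝ᵥ u = 0 := by
      have h1 : (μ (i, j) + (∑ π ∈ Finset.univ.erase ((i, j) : Fin n × Fin n), μ π)) ⬝ᵥ u
          = 0 := by rw [hsplit]; exact hvu
      rw [add_dotProduct, hOij, zero_add] at h1
      exact h1
    -- final assembly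
    have hfinal : ⁅tGL hij ξ, g⁆ = (tGL hij ξ * rk1GL u (μ (i, j)) hOij)
        * rk1GL u (∑ π ∈ Finset.univ.erase ((i, j) : Fin n × Fin n), μ π) hOrest := by
      apply Units.ext
      rw [Units.val_mul, Units.val_mul, hcommval, rk1GL_val, rk1GL_val, mul_assoc]
      congr 1
      rw [add_vmv_mul, hOij, zero_smul, add_zero, add_assoc, ← vmv_add_right, hsplit]
    rw [hfinal]
    refine mul_mem (lemmaF hij hri hrj u (μ (i, j)) lam ξ hOij hsupp hmiA huA huiA hfinA) ?_
    exact rk1_sum_mem (Finset.univ.erase ((i, j) : Fin n × Fin n)) μ u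
      (fun π _ => hOall π) hApieces (fun π _ => hzeros π)
      (rk1GL u (∑ π ∈ Finset.univ.erase ((i, j) : Fin n × Fin n), μ π) hOrest) rfl
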